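/- Let F be a free group and N ⊴ F a nontrivial finitely generated normal subgroup. Then N has finite index in F. -/

import Mathlib

open List

namespace Stmt7Aux

variable {α : Type*}

/-- the no-cancellation relation on letters -/
def NC (p q : α × Bool) : Prop := ¬(p.1 = q.1 ∧ p.2 = !q.2)

lemma reduce_eq_self_of_chain' [DecidableEq α] {L : List (α × Bool)}
    (h : L.Chain' NC) : FreeGroup.reduce L = L := by
  induction L with
  | nil => rfl
  | cons x L ih =>
    have hL : L.Chain' NC := (List.isChain_cons.mp h).2
    rw [FreeGroup.reduce.cons, ih hL]
    cases L with
    | nil => rfl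
    | cons hd tl =>
      have hx : NC x hd := (List.isChain_cons_cons.mp h).1
      simp only [NC] at hx
      simp [hx]

lemma chain'_of_reduce_eq_self [DecidableEq α] : ∀ {L : List (α × Bool)},
    FreeGroup.reduce L = L → L.Chain' NC := by
  intro L
  induction L with
  | nil => intro _; exact List.isChain_nil
  | cons x L ih =>
    intro h
    rw [FreeGroup.reduce.cons] at h
    rcases ht : FreeGroup.reduce L with _ | ⟨hd, tl⟩
    · rw [ht] at h
      have h' : [x] = x :: L := h
      obtain ⟨rfl⟩ : L = [] := by cases h'; rfl
      exact List.isChain_singleton x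
    · rw [ht] at h
      have h' : (if x.1 = hd.1 ∧ x.2 = !hd.2 then tl else x :: hd :: tl) = x :: L := h
      clear h
      by_cases hc : x.1 = hd.1 ∧ x.2 = !hd.2
      · rw [if_pos hc] at h' 
        have h1 : (FreeGroup.reduce L).length ≤ L.length :=
          FreeGroup.Red.length_le FreeGroup.reduce.red
      -- h : tl = x :: L, so reduce L = hd :: tl has length L.length + 2
        rw [ht, h'] at h1
        simp only [List.length_cons] at h1
        omega
      · rw [if_neg hc] at h'
        have hL : L = hd :: tl := by
          injection h' with _ h2
          exact h2.symm
        have : FreeGroup.reduce L = L := by rw [ht, hL]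
        subst hL
        exact List.isChain_cons_cons.mpr ⟨hc, ih this⟩

lemma chain'_toWord [DecidableEq α] (g : FreeGroup α) : g.toWord.Chain' NC :=
  chain'_of_reduce_eq_self (FreeGroup.reduce_toWord g)

variable [DecidableEq α] (N : Subgroup (FreeGroup α)) [N.Normal]
set_option linter.unusedSectionVars false

/-- the set of cosets visited when reading the word `L` starting from coset `c` -/
def vis (c : FreeGroup α ⧸ N) (L : List (α × Bool)) : Set (FreeGroup α ⧸ N) :=
  Set.range (fun k : ℕ => c * (QuotientGroup.mk (FreeGroup.mk (L.take k))))

lemma vis_finite (c : FreeGroup α ⧸ N) (L : List (α × Bool)) : (vis N c L).Finite := by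
  have : vis N c L ⊆ (fun k : ℕ => c * (QuotientGroup.mk (FreeGroup.mk (L.take k)))) ''
      (Set.Iic L.length) := by
    rintro v ⟨k, rfl⟩
    by_cases hk : k ≤ L.length
    · exact ⟨k, hk, rfl⟩
    · exact ⟨L.length, Set.mem_Iic.mpr le_rfl, by
        dsimp only
        rw [List.take_length, List.take_of_length_le (le_of_not_ge hk)]⟩
  exact ((Set.finite_Iic _).image _).subset this

lemma mem_vis_zero (c : FreeGroup α ⧸ N) (L : List (α × Bool)) : c ∈ vis N c L :=
  ⟨0, by simp [← FreeGroup.one_eq_mk]⟩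

lemma vis_append (c : FreeGroup α ⧸ N) (L₁ L₂ : List (α × Bool)) :
    vis N c (L₁ ++ L₂) ⊆ vis N c L₁ ∪ vis N (c * QuotientGroup.mk (FreeGroup.mk L₁)) L₂ := by
  rintro v ⟨k, rfl⟩
  dsimp only
  rw [List.take_append, ← FreeGroup.mul_mk]
  by_cases hk : k ≤ L₁.length
  · left
    refine ⟨k, ?_⟩
    have : k - L₁.length = 0 := by omega
    simp [this, ← FreeGroup.one_eq_mk]
  · right
    refine ⟨k - L₁.length, ?_⟩
    rw [List.take_of_length_le (by omega : L₁.length ≤ k)]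
    simp only [mul_assoc, ← FreeGroup.mul_mk, QuotientGroup.mk_mul]

lemma vis_step (c : FreeGroup α ⧸ N) {L L' : List (α × Bool)}
    (h : FreeGroup.Red.Step L L') : vis N c L' ⊆ vis N c L := by
  cases h with
  | @not L₁ L₂ x b =>
    rintro v ⟨k, rfl⟩
    by_cases hk : k ≤ L₁.length
    · refine ⟨k, ?_⟩
      dsimp only
      rw [List.take_append, List.take_append,
        (by omega : k - L₁.length = 0)]
      simp
    · refine ⟨k + 2, ?_⟩
      have h1 : L₁.length ≤ k := by omega
      have e1 : List.take (k + 2) (L₁ ++ (x, b) :: (x, !b) :: L₂)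
          = L₁ ++ (x, b) :: (x, !b) :: List.take (k - L₁.length) L₂ := by
        rw [List.take_append, List.take_of_length_le (by omega : L₁.length ≤ k + 2),
          (by omega : k + 2 - L₁.length = (k - L₁.length) + 1 + 1),
          List.take_succ_cons, List.take_succ_cons]
      have e2 : List.take k (L₁ ++ L₂) = L₁ ++ List.take (k - L₁.length) L₂ := by
        rw [List.take_append, List.take_of_length_le h1]
      dsimp only
      rw [e1, e2]
      congr 2
      rw [← FreeGroup.quot_mk_eq_mk, ← FreeGroup.quot_mk_eq_mk]
      exact Quot.sound (FreeGroup.Red.Step.not)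

lemma vis_red (c : FreeGroup α ⧸ N) {L L' : List (α × Bool)}
    (h : FreeGroup.Red L L') : vis N c L' ⊆ vis N c L := by
  induction h with
  | refl => exact le_rfl
  | tail _ h2 ih => exact le_trans (vis_step N c h2) ih

lemma exists_letter {β : Type*} [DecidableEq β] {a₁ a₂ : β} (ha : a₁ ≠ a₂) (p q r : β × Bool) :
    ∃ t : β × Bool, t ≠ p ∧ t ≠ q ∧ t ≠ r := by
  by_contra hcon
  push_neg at hcon
  have h' : ∀ t : β × Bool, t ∈ ({p, q, r} : Finset (β × Bool)) := by
    intro t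
    simp only [Finset.mem_insert, Finset.mem_singleton]
    by_cases h1 : t = p
    · exact Or.inl h1
    by_cases h2 : t = q
    · exact Or.inr (Or.inl h2)
    · exact Or.inr (Or.inr (hcon t h1 h2))
  have hsub : ({(a₁, true), (a₁, false), (a₂, true), (a₂, false)} : Finset (β × Bool)) ⊆
      ({p, q, r} : Finset (β × Bool)) := fun t _ => h' t
  have h4 : ({(a₁, true), (a₁, false), (a₂, true), (a₂, false)} : Finset (β × Bool)).card = 4 := by
    rw [Finset.card_insert_of_notMem (by simp [ha]), Finset.card_insert_of_notMem (by simp [ha]),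
      Finset.card_insert_of_notMem (by simp), Finset.card_singleton]
  have c1 := Finset.card_insert_le p ({q, r} : Finset (β × Bool))
  have c2 := Finset.card_insert_le q ({r} : Finset (β × Bool))
  have c3 : ({r} : Finset (β × Bool)).card = 1 := Finset.card_singleton r
  have hle := Finset.card_le_card hsub
  omega

end Stmt7Aux

/-- A nontrivial finitely generated normal subgroup of a free group has finite index. -/
theorem stmt_7 {α : Type*} (N : Subgroup (FreeGroup α)) [N.Normal]
    (hnt : N ≠ ⊥) (hfg : N.FG) : N.FiniteIndex := by
  classical
  suffices hfin : Finite (FreeGroup α ⧸ N) by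
    exact @Subgroup.finiteIndex_of_finite_quotient _ _ N hfin
  obtain ⟨w₀, hw₀N, hw₀⟩ := (Subgroup.bot_or_exists_ne_one N).resolve_left hnt
  have hW : FreeGroup.toWord w₀ ≠ [] := fun h => hw₀ (FreeGroup.toWord_eq_nil_iff.mp h)
  by_cases htwo : ∃ a₁ a₂ : α, a₁ ≠ a₂
  · -- main case
    obtain ⟨a₁, a₂, ha⟩ := htwo
    obtain ⟨S, hS⟩ := hfg
    set T : Set (FreeGroup α) := ↑S ∪ (↑S)⁻¹ with hT
    have hTfin : T.Finite := S.finite_toSet.union S.finite_toSet.inv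
    have hTN : T ⊆ ↑N := by
      rw [← hS]
      rintro y (hy | hy)
      · exact Subgroup.subset_closure hy
      · rw [Set.mem_inv] at hy
        exact (Subgroup.inv_mem_iff _).mp (Subgroup.subset_closure hy)
    set V₁ : Set (FreeGroup α ⧸ N) :=
      {1} ∪ ⋃ s ∈ T, Stmt7Aux.vis N 1 (FreeGroup.toWord s) with hV₁
    have hV₁fin : V₁.Finite :=
      (Set.finite_singleton 1).union (hTfin.biUnion fun s _ => Stmt7Aux.vis_finite N 1 _)
    have keyA : ∀ n ∈ N, Stmt7Aux.vis N 1 (FreeGroup.toWord n) ⊆ V₁ := by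
      intro n hn
      have hn' : n ∈ Submonoid.closure T := by
        have h1 := Subgroup.closure_toSubmonoid (↑S : Set (FreeGroup α))
        have h2 : n ∈ (Subgroup.closure (↑S : Set (FreeGroup α))).toSubmonoid := by
          rwa [Subgroup.mem_toSubmonoid, hS]
        rwa [h1] at h2
      obtain ⟨l, hl, hlprod⟩ := Submonoid.exists_list_of_mem_closure hn'
      have claim : ∀ l : List (FreeGroup α), (∀ y ∈ l, y ∈ T) →
          ∃ L : List (α × Bool), FreeGroup.mk L = l.prod ∧ Stmt7Aux.vis N 1 L ⊆ V₁ := by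
        intro l
        induction l with
        | nil =>
          intro _
          refine ⟨[], by rw [List.prod_nil]; exact FreeGroup.one_eq_mk.symm, ?_⟩
          rintro v ⟨k, rfl⟩
          dsimp only
          left
          simp [← FreeGroup.one_eq_mk]
        | cons y l ih =>
          intro hyl
          obtain ⟨L, hLmk, hLsub⟩ := ih fun z hz => hyl z (List.mem_cons_of_mem _ hz)
          have hyT : y ∈ T := hyl y (List.mem_cons_self)
          refine ⟨FreeGroup.toWord y ++ L, ?_, ?_⟩
          · rw [← FreeGroup.mul_mk, FreeGroup.mk_toWord, hLmk, List.prod_cons]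
          · refine le_trans (Stmt7Aux.vis_append N 1 _ _) ?_
            have h1 : (1 : FreeGroup α ⧸ N) * ↑(FreeGroup.mk (FreeGroup.toWord y)) = 1 := by
              rw [FreeGroup.mk_toWord, one_mul, QuotientGroup.eq_one_iff]
              exact hTN hyT
            rintro v (hv | hv)
            · right
              exact Set.mem_biUnion hyT hv
            · rw [h1] at hv
              exact hLsub hv
      obtain ⟨L, hLmk, hLsub⟩ := claim l hl
      have hred : FreeGroup.toWord n = FreeGroup.reduce L := by
        rw [← hlprod, ← hLmk, FreeGroup.toWord_mk]
      rw [hred]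
      exact le_trans (Stmt7Aux.vis_red N 1 FreeGroup.reduce.red) hLsub
    have keyB : ∀ v : FreeGroup α ⧸ N, v ∈ V₁ := by
      intro v
      obtain ⟨g, rfl⟩ := QuotientGroup.mk_surjective v
      by_cases hg : g = 1
      · subst hg
        left
        simp
      · have hG : FreeGroup.toWord g ≠ [] := fun h => hg (FreeGroup.toWord_eq_nil_iff.mp h)
        set G := FreeGroup.toWord g with hGdef
        set W := FreeGroup.toWord w₀ with hWdef
        set xl := G.getLast hG with hxl
        set f := W.head hW with hf
        set lst := W.getLast hW with hlst
        obtain ⟨t, ht1, ht2, ht3⟩ := Stmt7Aux.exists_letter ha (f.1, !f.2) lst (xl.1, !xl.2)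
        set t' : α × Bool := (t.1, !t.2) with ht'
        set τ : FreeGroup α := FreeGroup.mk [t] with hτ
        have hu : τ * w₀ * τ⁻¹ ∈ N := Subgroup.Normal.conj_mem ‹N.Normal› w₀ hw₀N τ
        set n : FreeGroup α := g * (τ * w₀ * τ⁻¹) * g⁻¹ with hn
        have hnN : n ∈ N := Subgroup.Normal.conj_mem ‹N.Normal› _ hu g
        set M : List (α × Bool) := t :: (W ++ [t']) with hM
        set R : List (α × Bool) := G ++ M ++ FreeGroup.invRev G with hR
        have hmk1 : FreeGroup.mk [t'] = τ⁻¹ := by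
          rw [hτ, FreeGroup.inv_mk]
          simp [FreeGroup.invRev, ht']
        have hmkR : FreeGroup.mk R = n := by
          have hMeq : (M : List (α × Bool)) = [t] ++ W ++ [t'] := by simp [hM]
          rw [hR, hMeq, ← FreeGroup.mul_mk, ← FreeGroup.mul_mk, ← FreeGroup.mul_mk,
            ← FreeGroup.mul_mk, hmk1, ← FreeGroup.inv_mk, hGdef, FreeGroup.mk_toWord,
            hWdef, FreeGroup.mk_toWord, hn, hτ]
        -- R is reduced
        have hcG : G.Chain' Stmt7Aux.NC := hGdef ▸ Stmt7Aux.chain'_toWord g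
        have hcW : W.Chain' Stmt7Aux.NC := hWdef ▸ Stmt7Aux.chain'_toWord w₀
        have hcInv : (FreeGroup.invRev G).Chain' Stmt7Aux.NC := by
          rw [hGdef, ← FreeGroup.toWord_inv]
          exact Stmt7Aux.chain'_toWord g⁻¹
        have nc1 : Stmt7Aux.NC xl t := fun ⟨h1, h2⟩ =>
          ht3 (Prod.ext h1.symm (by rw [h2, Bool.not_not]))
        have nc2 : Stmt7Aux.NC t f := fun ⟨h1, h2⟩ => ht1 (Prod.ext h1 h2)
        have nc3 : Stmt7Aux.NC lst t' := fun ⟨h1, h2⟩ => by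
          have h2' : lst.2 = t.2 := by simpa [ht'] using h2
          exact ht2 (Prod.ext h1.symm h2'.symm)
        have nc4 : Stmt7Aux.NC t' (xl.1, !xl.2) := fun ⟨h1, h2⟩ => by
          have h1' : t.1 = xl.1 := h1
          have h2' : t.2 = !xl.2 := by
            have : (!t.2) = xl.2 := by simpa [ht'] using h2
            rw [← this, Bool.not_not]
          exact ht3 (Prod.ext h1' h2')
        have hcM : M.Chain' Stmt7Aux.NC := by
          rw [hM]
          refine List.isChain_cons.mpr ⟨?_, ?_⟩
          · intro y hy
            rw [List.head?_append_of_ne_nil _ hW] at hy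
            rw [List.head?_eq_head hW] at hy
            obtain rfl : y = f := by injection hy with h; exact h.symm
            exact nc2
          · refine List.isChain_append.mpr ⟨hcW, List.isChain_singleton _, ?_⟩
            intro a ha' b hb
            rw [List.getLast?_eq_getLast hW] at ha'
            obtain rfl : a = lst := by injection ha' with h; exact h.symm
            obtain rfl : b = t' := by
              simp only [List.head?_cons, Option.mem_def, Option.some.injEq] at hb
              exact hb.symm
            exact nc3
        have hMne : M ≠ [] := by simp [hM]
        have hcGM : (G ++ M).Chain' Stmt7Aux.NC := by
          refine List.isChain_append.mpr ⟨hcG, hcM, ?_⟩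
          intro a ha' b hb
          rw [List.getLast?_eq_getLast hG] at ha'
          obtain rfl : a = xl := by injection ha' with h; exact h.symm
          obtain rfl : b = t := by
            rw [hM] at hb
            simp only [List.head?_cons, Option.mem_def, Option.some.injEq] at hb
            exact hb.symm
          exact nc1
        have hheadInv : (FreeGroup.invRev G).head? = some (xl.1, !xl.2) := by
          rw [FreeGroup.invRev, List.head?_reverse, List.getLast?_map,
            List.getLast?_eq_getLast hG]
          rfl
        have hcR : R.Chain' Stmt7Aux.NC := by
          rw [hR]
          refine List.isChain_append.mpr ⟨hcGM, hcInv, ?_⟩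
          intro a ha' b hb
          have hlastGM : (G ++ M).getLast? = some t' := by
            rw [List.getLast?_append_of_ne_nil _ hMne, hM]
            have : (W ++ [t']).getLast? = some t' := by
              rw [List.getLast?_append]
              rfl
            rw [List.getLast?_cons, this]
            rfl
          rw [hlastGM] at ha'
          obtain rfl : a = t' := by injection ha' with h; exact h.symm
          rw [hheadInv] at hb
          obtain rfl : b = (xl.1, !xl.2) := by injection hb with h; exact h.symm
          exact nc4
        have htw : FreeGroup.toWord n = R := by
          rw [← hmkR, FreeGroup.toWord_mk, Stmt7Aux.reduce_eq_self_of_chain' hcR]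
        refine keyA n hnN ⟨G.length, ?_⟩
        show (1 : FreeGroup α ⧸ N) * ↑(FreeGroup.mk ((FreeGroup.toWord n).take G.length))
            = ↑g
        rw [htw, hR, List.append_assoc, List.take_left, hGdef, FreeGroup.mk_toWord, one_mul]
    have huniv : (Set.univ : Set (FreeGroup α ⧸ N)).Finite :=
      hV₁fin.subset fun v _ => keyB v
    exact Set.finite_univ_iff.mp huniv
  · -- essentially the infinite cyclic case
    push_neg at htwo
    obtain ⟨p, W', hpW⟩ := List.exists_cons_of_ne_nil hW
    set a := p.1 with hadef
    have key : ∀ g : FreeGroup α, ∃ k : ℤ, g = FreeGroup.of a ^ k := by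
      intro g
      induction g using FreeGroup.induction_on with
      | C1 => exact ⟨0, (zpow_zero _).symm⟩
      | of x =>
        refine ⟨1, ?_⟩
        rw [zpow_one]
        show FreeGroup.of x = FreeGroup.of a
        rw [htwo x a]
      | inv_of x hx =>
        obtain ⟨k, hk⟩ := hx
        exact ⟨-k, by rw [hk, ← zpow_neg]⟩
      | mul x y hx hy =>
        obtain ⟨k, hk⟩ := hx
        obtain ⟨m, hm⟩ := hy
        exact ⟨k + m, by rw [hk, hm, ← zpow_add]⟩
    obtain ⟨m, hm⟩ := key w₀
    have hm0 : m ≠ 0 := fun h => hw₀ (by rw [hm, h, zpow_zero])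
    set x : FreeGroup α ⧸ N := ↑(FreeGroup.of a) with hx
    have hxm : x ^ m = 1 := by
      rw [hx, ← QuotientGroup.mk_zpow, QuotientGroup.eq_one_iff]
      exact hm ▸ hw₀N
    have hfo : IsOfFinOrder x := isOfFinOrder_iff_zpow_eq_one.mpr ⟨m, hm0, hxm⟩
    have huniv : (Set.univ : Set (FreeGroup α ⧸ N)).Finite := by
      refine hfo.finite_zpowers.subset fun v _ => ?_
      obtain ⟨g, rfl⟩ := QuotientGroup.mk_surjective v
      obtain ⟨k, rfl⟩ := key g
      refine ⟨k, ?_⟩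
      show x ^ k = ↑(FreeGroup.of a ^ k)
      rw [QuotientGroup.mk_zpow]
    exact Set.finite_univ_iff.mp huniv
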